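/- For all reals 0 < λ_c ≤ λ_n and 0 ≤ r_c ≤ r_n, the inequality exp(-λ_n·r_n)/λ_n - exp(-λ_n·r_c)/λ_n + exp(-λ_c·r_c)/λ_c - exp(-λ_c·r_n)/λ_c ≥ 0 holds. -/

import Mathlib

open intervalIntegral Real

lemma exp_integral_aux (l rc rn : ℝ) (hl : 0 < l) :
    ∫ t in rc..rn, Real.exp (-l * t) =
      Real.exp (-l * rc) / l - Real.exp (-l * rn) / l := by
  have h : ∀ t ∈ Set.uIcc rc rn,
      HasDerivAt (fun t => -Real.exp (-l * t) / l) (Real.exp (-l * t)) t := by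
    intro t _
    have h1 : HasDerivAt (fun t : ℝ => -l * t) (-l) t := by
      simpa using (hasDerivAt_id t).const_mul (-l)
    have h2 := (h1.exp).neg.div_const l
    refine h2.congr_deriv ?_
    field_simp
  rw [integral_eq_sub_of_hasDerivAt h]
  · ring
  · apply Continuous.intervalIntegrable
    continuity

/-- Verification inequality for the omitted constraint IC_{n,c}. -/
theorem ICnc_inequality (lc ln rc rn : ℝ)
    (hlc : 0 < lc) (hle : lc ≤ ln) (hrc : 0 ≤ rc) (hrn : rc ≤ rn) :
    Real.exp (-ln * rn) / ln - Real.exp (-ln * rc) / ln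
      + Real.exp (-lc * rc) / lc - Real.exp (-lc * rn) / lc ≥ 0 := by
  have hln : 0 < ln := lt_of_lt_of_le hlc hle
  have h1 := exp_integral_aux lc rc rn hlc
  have h2 := exp_integral_aux ln rc rn hln
  have key : (∫ t in rc..rn, (Real.exp (-lc * t) - Real.exp (-ln * t))) =
      Real.exp (-ln * rn) / ln - Real.exp (-ln * rc) / ln
      + Real.exp (-lc * rc) / lc - Real.exp (-lc * rn) / lc := by
    rw [intervalIntegral.integral_sub
      (Continuous.intervalIntegrable (by continuity) _ _)
      (Continuous.intervalIntegrable (by continuity) _ _), h1, h2]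
    ring
  rw [ge_iff_le, ← key]
  apply intervalIntegral.integral_nonneg hrn
  intro t ht
  have ht0 : 0 ≤ t := le_trans hrc ht.1
  have : -ln * t ≤ -lc * t := by nlinarith
  simpa using Real.exp_le_exp.mpr this
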